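/- Let 0 < q < 1 and let z be real with 0 ≤ z < 1. For all integers m, n ≥ 0, one has ∑_{a > m} (q^m z^{a−m}/[a])·C_q^{(1)}(a,n;z) = z·q^{mn+m+n}·[m]! [n]!/[m+n+1]! · φ_q(q^{m+1}, q^{n+1}; q^{m+n+2}; z), where the sum is over integers a > m; in particular the left-hand side is symmetric in m and n. -/

import Mathlib

set_option linter.unusedSectionVars false


/-- The q-integer [m] = (1 − q^m)/(1 − q). -/
noncomputable def qInt (q : ℝ) (m : ℕ) : ℝ := (1 - q ^ m) / (1 - q)

/-- The q-factorial [m]! = [1][2]⋯[m]. -/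
noncomputable def qFact (q : ℝ) (m : ℕ) : ℝ := ∏ i ∈ Finset.range m, qInt q (i + 1)

/-- The q-shifted factorial (a;q)_n = (1−a)(1−qa)⋯(1−q^{n−1}a). -/
noncomputable def qPoch (q a : ℝ) (n : ℕ) : ℝ := ∏ i ∈ Finset.range n, (1 - q ^ i * a)

/-- The q-hypergeometric series φ_q(α,β;γ;z) = ∑_{n≥0} (α;q)_n (β;q)_n / ((γ;q)_n (q;q)_n) · zⁿ. -/
noncomputable def qHyp (q α β γ z : ℝ) : ℝ :=
  ∑' n : ℕ, qPoch q α n * qPoch q β n / (qPoch q γ n * qPoch q q n) * z ^ n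

/-- The first q-connector C_q^{(1)}(m,n;z) = q^{mn} [m]![n]!/[m+n]! · φ_q(q^m,q^n;q^{m+n+1};z). -/
noncomputable def Cq1 (q : ℝ) (m n : ℕ) (z : ℝ) : ℝ :=
  q ^ (m * n) * (qFact q m * qFact q n / qFact q (m + n)) *
    qHyp q (q ^ m) (q ^ n) (q ^ (m + n + 1)) z

noncomputable def coefT (q : ℝ) (n a j : ℕ) : ℝ :=
  q ^ (a*n) / qInt q a * (qFact q a * qFact q n / qFact q (a+n)) *
    (qPoch q (q^a) j * qPoch q (q^n) j / (qPoch q (q^(a+n+1)) j * qPoch q q j))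

lemma aux_field (x y I Fm Fn Fmn A B Pn C2 D Qk w : ℝ) (hI : I ≠ 0) (hFmn : Fmn ≠ 0)
    (hC2 : C2 ≠ 0) (hD : D ≠ 0) (hQk : Qk ≠ 0) (hw : w ≠ 0) :
    x * y / I * (Fm * A / w * I * Fn / (Fmn * C2 / w)) * (B * Pn / (D * Qk))
      = x * (Fm * Fn / Fmn) * (A * B / (C2 * D)) * (y * Pn / Qk) := by
  field_simp

section basics
variable {q : ℝ} (hq0 : 0 < q) (hq1 : q < 1)
include hq0 hq1

lemma one_sub_q_pos : 0 < 1 - q := by linarith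

lemma qpow_le_q {s : ℕ} (hs : 1 ≤ s) : q ^ s ≤ q := by
  calc q ^ s ≤ q ^ 1 := pow_le_pow_of_le_one hq0.le hq1.le hs
  _ = q := pow_one q

lemma qpow_lt_one {s : ℕ} (hs : 1 ≤ s) : q ^ s < 1 := lt_of_le_of_lt (qpow_le_q hq0 hq1 hs) hq1

lemma qInt_ge_one {s : ℕ} (hs : 1 ≤ s) : 1 ≤ qInt q s := by
  rw [qInt, le_div_iff₀ (one_sub_q_pos hq0 hq1)]
  have := qpow_le_q hq0 hq1 hs; linarith

lemma qInt_pos {s : ℕ} (hs : 1 ≤ s) : 0 < qInt q s :=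
  lt_of_lt_of_le one_pos (qInt_ge_one hq0 hq1 hs)

lemma qInt_le (s : ℕ) : qInt q s ≤ (1 - q)⁻¹ := by
  rw [qInt, div_le_iff₀ (one_sub_q_pos hq0 hq1),
    inv_mul_cancel₀ (one_sub_q_pos hq0 hq1).ne']
  have : 0 ≤ q ^ s := pow_nonneg hq0.le s
  linarith

lemma qFact_ge_one (m : ℕ) : 1 ≤ qFact q m := by
  rw [qFact]
  have h := Finset.prod_le_prod (f := fun _ : ℕ => (1:ℝ)) (g := fun i => qInt q (i+1))
    (s := Finset.range m) (fun i _ => zero_le_one)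
    (fun i _ => qInt_ge_one hq0 hq1 (Nat.le_add_left 1 i))
  simpa using h

lemma qFact_pos (m : ℕ) : 0 < qFact q m := lt_of_lt_of_le one_pos (qFact_ge_one hq0 hq1 m)

lemma qFact_le (m : ℕ) : qFact q m ≤ ((1 - q)⁻¹) ^ m := by
  rw [qFact]
  calc ∏ i ∈ Finset.range m, qInt q (i + 1) ≤ ∏ _i ∈ Finset.range m, (1 - q)⁻¹ :=
        Finset.prod_le_prod (fun i _ => (qInt_pos hq0 hq1 (Nat.le_add_left 1 i)).le)
          (fun i _ => qInt_le hq0 hq1 _)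
  _ = ((1 - q)⁻¹) ^ m := by rw [Finset.prod_const, Finset.card_range]

lemma qFact_mono (a n : ℕ) : qFact q a ≤ qFact q (a + n) := by
  rw [qFact, qFact, Finset.prod_range_add]
  nth_rewrite 1 [← mul_one (∏ i ∈ Finset.range a, qInt q (i+1))]
  gcongr
  · exact Finset.prod_nonneg fun i _ => (qInt_pos hq0 hq1 (Nat.le_add_left 1 i)).le
  · have h := Finset.prod_le_prod (f := fun _ : ℕ => (1:ℝ)) (g := fun i => qInt q (a+i+1))
      (s := Finset.range n) (fun i _ => zero_le_one)
      (fun i _ => qInt_ge_one hq0 hq1 (Nat.le_add_left 1 _))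
    simpa using h

omit hq0 hq1 in
lemma qFact_succ (m : ℕ) : qFact q (m + 1) = qFact q m * qInt q (m + 1) :=
  Finset.prod_range_succ _ m

omit hq0 hq1 in
lemma qPoch_succ (a : ℝ) (k : ℕ) : qPoch q a (k + 1) = qPoch q a k * (1 - q ^ k * a) :=
  Finset.prod_range_succ _ k

omit hq0 hq1 in
lemma qPoch_zero (a : ℝ) : qPoch q a 0 = 1 := rfl

omit hq0 hq1 in
lemma qPoch_add (a : ℝ) (k l : ℕ) :
    qPoch q a (k + l) = qPoch q a k * qPoch q (q ^ k * a) l := by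
  rw [qPoch, qPoch, qPoch, Finset.prod_range_add]
  congr 1
  exact Finset.prod_congr rfl fun i _ => by rw [pow_add]; ring

lemma qPoch_pow_pos {c : ℕ} (hc : 1 ≤ c) (j : ℕ) : 0 < qPoch q (q ^ c) j := by
  rw [qPoch]
  apply Finset.prod_pos
  intro i _
  rw [← pow_add]
  have := qpow_lt_one hq0 hq1 (le_trans hc (Nat.le_add_left c i))
  linarith

lemma qPoch_pow_le_one (c : ℕ) (j : ℕ) : qPoch q (q ^ c) j ≤ 1 := by
  rw [qPoch]
  apply Finset.prod_le_one
  · intro i _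
    rw [← pow_add]
    have : q ^ (i + c) ≤ 1 := pow_le_one₀ hq0.le hq1.le
    linarith
  · intro i _
    rw [← pow_add]
    have : 0 < q ^ (i + c) := pow_pos hq0 _
    linarith

lemma qPoch_pow_nonneg (c : ℕ) (j : ℕ) : 0 ≤ qPoch q (q ^ c) j := by
  rw [qPoch]
  apply Finset.prod_nonneg
  intro i _
  rw [← pow_add]
  have : q ^ (i + c) ≤ 1 := pow_le_one₀ hq0.le hq1.le
  linarith

lemma one_sub_ge_exp {x : ℝ} (hx0 : 0 ≤ x) (hxq : x ≤ q) :
    Real.exp (-(x / (1 - q))) ≤ 1 - x := by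
  have h1q := one_sub_q_pos hq0 hq1
  set t := x / (1 - q) with ht
  have ht0 : 0 ≤ t := div_nonneg hx0 h1q.le
  have hx1 : 0 < 1 - x := by linarith
  have hexp : 1 + t ≤ Real.exp t := by have := Real.add_one_le_exp t; linarith
  have h1 : Real.exp (-t) ≤ (1 + t)⁻¹ := by
    rw [Real.exp_neg]
    exact inv_anti₀ (by linarith) hexp
  have hts : t * (1 - q) = x := div_mul_cancel₀ x h1q.ne'
  have key : 1 ≤ (1 - x) * (1 + t) := by nlinarith [mul_nonneg ht0 (sub_nonneg.2 hxq)]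
  have h2 : (1 + t)⁻¹ ≤ 1 - x := by
    rw [inv_eq_one_div, div_le_iff₀ (by linarith : (0:ℝ) < 1 + t)]
    linarith
  linarith

lemma qPoch_pow_ge {c : ℕ} (hc : 1 ≤ c) (j : ℕ) :
    Real.exp (-(q / (1 - q) ^ 2)) ≤ qPoch q (q ^ c) j := by
  have h1q := one_sub_q_pos hq0 hq1
  have step : ∀ i : ℕ, Real.exp (-(q ^ (i + 1) / (1 - q))) ≤ 1 - q ^ i * q ^ c := by
    intro i
    have h1 : q ^ (i + c) ≤ q ^ (i + 1) := pow_le_pow_of_le_one hq0.le hq1.le (by omega)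
    have h2 : Real.exp (-(q ^ (i+1) / (1-q))) ≤ 1 - q ^ (i + 1) :=
      one_sub_ge_exp hq0 hq1 (pow_nonneg hq0.le _) (qpow_le_q hq0 hq1 (by omega))
    rw [← pow_add]
    linarith
  have hs : ∑ i ∈ Finset.range j, q ^ (i + 1) ≤ q / (1 - q) := by
    have he : ∑ i ∈ Finset.range j, q ^ (i+1) = q * ∑ i ∈ Finset.range j, q ^ i := by
      rw [Finset.mul_sum]; exact Finset.sum_congr rfl fun i _ => by ring
    have heq : (q ^ j - 1) / (q - 1) = (1 - q ^ j) / (1 - q) := by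
      rw [div_eq_div_iff (by linarith : q - 1 ≠ 0) h1q.ne']; ring
    rw [he, geom_sum_eq (by linarith : q ≠ 1), heq, mul_div_assoc']
    gcongr
    nlinarith [pow_nonneg hq0.le j]
  have hgeom : ∑ i ∈ Finset.range j, q ^ (i + 1) / (1 - q) ≤ q / (1 - q) ^ 2 := by
    have hs' : (∑ i ∈ Finset.range j, q ^ (i + 1)) * (1 - q) ≤ q := by
      have h := mul_le_mul_of_nonneg_right hs h1q.le
      rwa [div_mul_cancel₀ q h1q.ne'] at h
    rw [← Finset.sum_div, div_le_div_iff₀ h1q (by positivity : (0:ℝ) < (1-q)^2)]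
    nlinarith [mul_le_mul_of_nonneg_right hs' h1q.le]
  have hprod : Real.exp (-(∑ i ∈ Finset.range j, q ^ (i+1) / (1 - q)))
      = ∏ i ∈ Finset.range j, Real.exp (-(q ^ (i+1) / (1 - q))) := by
    rw [← Real.exp_sum]
    congr 1
    rw [Finset.sum_neg_distrib]
  calc Real.exp (-(q / (1 - q) ^ 2))
      ≤ Real.exp (-(∑ i ∈ Finset.range j, q ^ (i+1) / (1 - q))) := by
        apply Real.exp_le_exp.2; linarith
  _ = ∏ i ∈ Finset.range j, Real.exp (-(q ^ (i+1) / (1 - q))) := hprod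
  _ ≤ ∏ i ∈ Finset.range j, (1 - q ^ i * q ^ c) :=
        Finset.prod_le_prod (fun i _ => (Real.exp_pos _).le) (fun i _ => step i)
  _ = qPoch q (q ^ c) j := rfl

lemma qInt_mul (s : ℕ) : qInt q s * (1 - q) = 1 - q ^ s :=
  div_mul_cancel₀ _ (one_sub_q_pos hq0 hq1).ne'

lemma qPoch_q_pos (j : ℕ) : 0 < qPoch q q j := by
  have h := qPoch_pow_pos hq0 hq1 (le_refl 1) j
  rwa [pow_one] at h

lemma qFact_add (m k : ℕ) :
    qFact q (m + k) * (1 - q) ^ k = qFact q m * qPoch q (q ^ (m+1)) k := by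
  induction k with
  | zero => simp [qPoch_zero]
  | succ k ih =>
    have e1 : m + (k+1) = (m + k) + 1 := by omega
    rw [e1, qFact_succ, qPoch_succ, pow_succ]
    have e2 : qInt q (m + k + 1) * (1 - q) = 1 - q ^ (m + k + 1) := qInt_mul hq0 hq1 _
    have e3 : q ^ k * q ^ (m + 1) = q ^ (m + k + 1) := by rw [← pow_add]; ring_nf
    calc qFact q (m+k) * qInt q (m+k+1) * ((1-q)^k * (1-q))
        = (qFact q (m+k) * (1-q)^k) * (qInt q (m+k+1) * (1-q)) := by ring
      _ = qFact q m * qPoch q (q^(m+1)) k * (1 - q ^ (m+k+1)) := by rw [ih, e2]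
      _ = qFact q m * (qPoch q (q^(m+1)) k * (1 - q ^ k * q ^ (m+1))) := by rw [e3]; ring

lemma red (n N : ℕ) :
    ∑ k ∈ Finset.range (N+1), (q^n)^k * qPoch q (q^n) (N-k) / qPoch q q (N-k)
      = qPoch q (q^(n+1)) N / qPoch q q N := by
  induction N with
  | zero => simp [qPoch_zero]
  | succ N ih =>
    rw [Finset.sum_range_succ']
    have hstep : ∀ k, (q^n)^(k+1) * qPoch q (q^n) (N+1-(k+1)) / qPoch q q (N+1-(k+1))
        = q^n * ((q^n)^k * qPoch q (q^n) (N-k) / qPoch q q (N-k)) := by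
      intro k
      rw [Nat.succ_sub_succ, pow_succ]
      ring
    rw [Finset.sum_congr rfl (fun k _ => hstep k), ← Finset.mul_sum, ih]
    simp only [pow_zero, one_mul, Nat.sub_zero]
    have hQ : 0 < qPoch q q N := qPoch_q_pos hq0 hq1 N
    have hQ1 : 0 < qPoch q q (N+1) := qPoch_q_pos hq0 hq1 (N+1)
    have eQ : qPoch q q (N+1) = qPoch q q N * (1 - q ^ N * q) := qPoch_succ q N
    have eP1 : qPoch q (q^(n+1)) (N+1) = qPoch q (q^(n+1)) N * (1 - q ^ N * q^(n+1)) :=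
      qPoch_succ _ N
    have eP2 : qPoch q (q^n) (N+1) = (1 - q^n) * qPoch q (q^(n+1)) N := by
      have h := qPoch_add (q := q) (q^n) 1 N
      rw [show 1 + N = N + 1 from by omega] at h
      rw [h, qPoch_succ, qPoch_zero, pow_one,
        show q * q^n = q^(n+1) from by rw [pow_succ]; ring]
      ring
    have h1 : (1:ℝ) - q ^ N * q ≠ 0 := by
      have : q ^ N * q = q ^ (N+1) := (pow_succ q N).symm
      rw [this]
      have := qpow_lt_one hq0 hq1 (le_add_self : 1 ≤ N + 1)
      linarith
    rw [eP1, eP2, eQ]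
    field_simp
    ring
lemma termEq (m n N k : ℕ) (hk : k ≤ N) :
    coefT q n (m+1+k) (N-k)
      = (q ^ (m*n+n) * (qFact q m * qFact q n / qFact q (m+n+1)) *
          (qPoch q (q^(m+1)) N / qPoch q (q^(m+n+2)) N)) *
        ((q^n)^k * qPoch q (q^n) (N-k) / qPoch q q (N-k)) := by
  have h1q := one_sub_q_pos hq0 hq1
  have e1 : m + 1 + k = (m + k) + 1 := by omega
  have e2 : (m + 1 + k) + n = (m + n + 1) + k := by omega
  have hFa : qFact q (m+1+k) = qFact q (m+k) * qInt q (m+k+1) := by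
    rw [e1, qFact_succ]
  have hF1 := qFact_add hq0 hq1 m k
  have hF2 := qFact_add hq0 hq1 (m+n+1) k
  rw [show m + n + 1 + 1 = m + n + 2 from by omega] at hF2
  have hP1 := qPoch_add (q := q) (q^(m+1)) k (N-k)
  rw [show k + (N-k) = N from by omega,
    show q ^ k * q ^ (m+1) = q ^ (m+1+k) from by rw [← pow_add]; ring_nf] at hP1
  have hP2 := qPoch_add (q := q) (q^(m+n+2)) k (N-k)
  rw [show k + (N-k) = N from by omega,
    show q ^ k * q ^ (m+n+2) = q ^ ((m+1+k)+n+1) from by rw [← pow_add]; ring_nf] at hP2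
  have hpow : q ^ ((m+1+k)*n) = q ^ (m*n+n) * (q^n)^k := by
    rw [← pow_mul, ← pow_add]
    congr 1
    ring
  -- nonzeroness
  have hI : qInt q (m+k+1) ≠ 0 := (qInt_pos hq0 hq1 (by omega)).ne'
  have hFmn : qFact q (m+n+1) ≠ 0 := (qFact_pos hq0 hq1 _).ne'
  have hC2 : qPoch q (q^(m+n+2)) k ≠ 0 := (qPoch_pow_pos hq0 hq1 (by omega) k).ne'
  have hD : qPoch q (q^((m+1+k)+n+1)) (N-k) ≠ 0 := (qPoch_pow_pos hq0 hq1 (by omega) _).ne'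
  have hQk : qPoch q q (N-k) ≠ 0 := (qPoch_q_pos hq0 hq1 _).ne'
  have h1qk : ((1:ℝ) - q) ^ k ≠ 0 := pow_ne_zero k h1q.ne'
  rw [coefT, hpow, hFa, e2, hP1, hP2]
  rw [show qInt q (m+1+k) = qInt q (m+k+1) from by rw [e1]]
  -- replace qFact (m+k) and qFact (m+n+1+k) using hF1, hF2
  have hF1' : qFact q (m+k) = qFact q m * qPoch q (q^(m+1)) k / (1-q)^k := by
    field_simp [h1qk]
    linarith [hF1]
  have hF2' : qFact q (m+n+1+k) = qFact q (m+n+1) * qPoch q (q^(m+n+2)) k / (1-q)^k := by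
    field_simp [h1qk]
    linarith [hF2]
  rw [hF1', hF2']
  rw [show qPoch q (q^(m+n+1+k+1)) (N-k) = qPoch q (q^(m+1+k+n+1)) (N-k) from by
    rw [show m+n+1+k+1 = m+1+k+n+1 from by omega]]
  exact aux_field _ _ _ _ _ _ _ _ _ _ _ _ _ hI hFmn hC2 hD hQk h1qk

lemma keyId (m n N : ℕ) :
    ∑ k ∈ Finset.range (N+1), coefT q n (m+1+k) (N-k)
      = q ^ (m*n+n) * (qFact q m * qFact q n / qFact q (m+n+1)) *
        (qPoch q (q^(m+1)) N * qPoch q (q^(n+1)) N /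
          (qPoch q (q^(m+n+2)) N * qPoch q q N)) := by
  rw [Finset.sum_congr rfl
    (fun k hk => termEq hq0 hq1 m n N k (by
      have := Finset.mem_range.1 hk; omega))]
  rw [← Finset.mul_sum, red hq0 hq1 n N]
  field_simp

lemma coefT_nonneg {a : ℕ} (ha : 1 ≤ a) (n j : ℕ) : 0 ≤ coefT q n a j := by
  rw [coefT]
  have h1 : 0 ≤ q ^ (a*n) / qInt q a :=
    div_nonneg (pow_nonneg hq0.le _) (qInt_pos hq0 hq1 ha).le
  have h2 : 0 ≤ qFact q a * qFact q n / qFact q (a+n) :=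
    div_nonneg (mul_nonneg (qFact_pos hq0 hq1 _).le (qFact_pos hq0 hq1 _).le)
      (qFact_pos hq0 hq1 _).le
  have h3 : 0 ≤ qPoch q (q^a) j * qPoch q (q^n) j / (qPoch q (q^(a+n+1)) j * qPoch q q j) := by
    apply div_nonneg
    · exact mul_nonneg (qPoch_pow_nonneg hq0 hq1 _ _) (qPoch_pow_nonneg hq0 hq1 _ _)
    · exact mul_nonneg (qPoch_pow_pos hq0 hq1 (by omega) j).le (qPoch_q_pos hq0 hq1 j).le
  exact mul_nonneg (mul_nonneg h1 h2) h3

lemma coefT_le {a : ℕ} (ha : 1 ≤ a) (n j : ℕ) :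
    coefT q n a j ≤ ((1-q)⁻¹) ^ n *
      ((Real.exp (-(q / (1 - q) ^ 2)))⁻¹ * (Real.exp (-(q / (1 - q) ^ 2)))⁻¹) := by
  set E := Real.exp (-(q / (1 - q) ^ 2)) with hE
  have hEpos : 0 < E := Real.exp_pos _
  rw [coefT]
  have h1 : q ^ (a*n) / qInt q a ≤ 1 := by
    rw [div_le_one (qInt_pos hq0 hq1 ha)]
    calc q ^ (a*n) ≤ 1 := pow_le_one₀ hq0.le hq1.le
    _ ≤ qInt q a := qInt_ge_one hq0 hq1 ha
  have h1' : 0 ≤ q ^ (a*n) / qInt q a :=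
    div_nonneg (pow_nonneg hq0.le _) (qInt_pos hq0 hq1 ha).le
  have h2 : qFact q a * qFact q n / qFact q (a+n) ≤ ((1-q)⁻¹) ^ n := by
    have hle : qFact q a * qFact q n ≤ ((1-q)⁻¹) ^ n * qFact q (a+n) := by
      calc qFact q a * qFact q n ≤ qFact q (a+n) * ((1-q)⁻¹) ^ n :=
            mul_le_mul (qFact_mono hq0 hq1 a n) (qFact_le hq0 hq1 n)
              (qFact_pos hq0 hq1 n).le (qFact_pos hq0 hq1 _).le
      _ = ((1-q)⁻¹) ^ n * qFact q (a+n) := by ring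
    rw [div_le_iff₀ (qFact_pos hq0 hq1 (a+n))]
    exact hle
  have h2' : 0 ≤ qFact q a * qFact q n / qFact q (a+n) :=
    div_nonneg (mul_nonneg (qFact_pos hq0 hq1 _).le (qFact_pos hq0 hq1 _).le)
      (qFact_pos hq0 hq1 _).le
  have h3 : qPoch q (q^a) j * qPoch q (q^n) j / (qPoch q (q^(a+n+1)) j * qPoch q q j)
      ≤ E⁻¹ * E⁻¹ := by
    have hnum : qPoch q (q^a) j * qPoch q (q^n) j ≤ 1 := by
      calc qPoch q (q^a) j * qPoch q (q^n) j ≤ 1 * 1 :=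
            mul_le_mul (qPoch_pow_le_one hq0 hq1 _ _) (qPoch_pow_le_one hq0 hq1 _ _)
              (qPoch_pow_nonneg hq0 hq1 _ _) zero_le_one
      _ = 1 := by ring
    have hden : E * E ≤ qPoch q (q^(a+n+1)) j * qPoch q q j := by
      have hb : E ≤ qPoch q q j := by
        have h := qPoch_pow_ge hq0 hq1 (le_refl 1) j
        rwa [pow_one] at h
      exact mul_le_mul (qPoch_pow_ge hq0 hq1 (by omega) j) hb hEpos.le
        (qPoch_pow_pos hq0 hq1 (by omega) j).le
    calc qPoch q (q^a) j * qPoch q (q^n) j / (qPoch q (q^(a+n+1)) j * qPoch q q j)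
        ≤ 1 / (E * E) := by
          apply div_le_div₀ zero_le_one hnum (by positivity) hden
    _ = E⁻¹ * E⁻¹ := by rw [one_div, mul_inv]
  have h3' : 0 ≤ qPoch q (q^a) j * qPoch q (q^n) j / (qPoch q (q^(a+n+1)) j * qPoch q q j) :=
    div_nonneg (mul_nonneg (qPoch_pow_nonneg hq0 hq1 _ _) (qPoch_pow_nonneg hq0 hq1 _ _))
      (mul_nonneg (qPoch_pow_pos hq0 hq1 (by omega) j).le (qPoch_q_pos hq0 hq1 j).le)
  calc q ^ (a*n) / qInt q a * (qFact q a * qFact q n / qFact q (a+n)) *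
        (qPoch q (q^a) j * qPoch q (q^n) j / (qPoch q (q^(a+n+1)) j * qPoch q q j))
      ≤ 1 * ((1-q)⁻¹ ^ n) * (E⁻¹ * E⁻¹) := by
        have h1q := one_sub_q_pos hq0 hq1
        apply mul_le_mul _ h3 h3'
          (mul_nonneg zero_le_one (pow_nonneg (inv_nonneg.2 h1q.le) n))
        exact mul_le_mul h1 h2 h2' zero_le_one
  _ = ((1-q)⁻¹) ^ n * (E⁻¹ * E⁻¹) := by ring

lemma summable_T {z : ℝ} (hz0 : 0 ≤ z) (hz1 : z < 1) (m n : ℕ) :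
    Summable (fun p : ℕ × ℕ => q ^ m * z ^ (p.1 + 1 + p.2) * coefT q n (m+1+p.1) p.2) := by
  set E := Real.exp (-(q / (1 - q) ^ 2)) with hE
  set K := ((1-q)⁻¹) ^ n * (E⁻¹ * E⁻¹) with hK
  have hKpos : 0 < K := by
    have := Real.exp_pos (-(q / (1 - q) ^ 2))
    have h1q := one_sub_q_pos hq0 hq1
    positivity
  apply Summable.of_nonneg_of_le
    (f := fun p : ℕ × ℕ => (K * z ^ p.1) * z ^ p.2)
  · intro p
    exact mul_nonneg (mul_nonneg (pow_nonneg hq0.le m) (pow_nonneg hz0 _))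
      (coefT_nonneg hq0 hq1 (by omega) n p.2)
  · intro p
    have hz' : z ^ (p.1 + 1 + p.2) ≤ z ^ p.1 * z ^ p.2 := by
      have : z ^ (p.1 + 1 + p.2) = (z ^ p.1 * z ^ p.2) * z := by
        rw [← pow_add, ← pow_succ]
        congr 1
        omega
      rw [this]
      nth_rewrite 2 [← mul_one (z ^ p.1 * z ^ p.2)]
      apply mul_le_mul_of_nonneg_left hz1.le
        (mul_nonneg (pow_nonneg hz0 _) (pow_nonneg hz0 _))
    calc q ^ m * z ^ (p.1 + 1 + p.2) * coefT q n (m+1+p.1) p.2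
        ≤ 1 * (z ^ p.1 * z ^ p.2) * K := by
          apply mul_le_mul _ (coefT_le hq0 hq1 (by omega) n p.2)
            (coefT_nonneg hq0 hq1 (by omega) n p.2)
            (mul_nonneg zero_le_one (mul_nonneg (pow_nonneg hz0 _) (pow_nonneg hz0 _)))
          exact mul_le_mul (pow_le_one₀ hq0.le hq1.le) hz'
            (pow_nonneg hz0 _) zero_le_one
    _ = (K * z ^ p.1) * z ^ p.2 := by ring
  · exact Summable.mul_of_nonneg
      ((summable_geometric_of_lt_one hz0 hz1).mul_left K)
      (summable_geometric_of_lt_one hz0 hz1)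
      (fun i => mul_nonneg hKpos.le (pow_nonneg hz0 _))
      (fun j => pow_nonneg hz0 _)

omit hq0 hq1 in
lemma qHyp_comm (α β γ z : ℝ) : qHyp q α β γ z = qHyp q β α γ z := by
  unfold qHyp
  exact tsum_congr fun k => by ring

lemma main_eval {z : ℝ} (hz0 : 0 ≤ z) (hz1 : z < 1) (m n : ℕ) :
    ∑' a : {a : ℕ // m < a}, q ^ m * z ^ ((a : ℕ) - m) / qInt q a * Cq1 q a n z
      = z * q ^ (m * n + m + n) * (qFact q m * qFact q n / qFact q (m + n + 1)) *
        qHyp q (q ^ (m + 1)) (q ^ (n + 1)) (q ^ (m + n + 2)) z := by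
  classical
  set T : ℕ × ℕ → ℝ := fun p => q ^ m * z ^ (p.1 + 1 + p.2) * coefT q n (m+1+p.1) p.2 with hT
  have hsum : Summable T := summable_T hq0 hq1 hz0 hz1 m n
  let e : ℕ ≃ {a : ℕ // m < a} :=
    { toFun := fun i => ⟨m + 1 + i, by omega⟩
      invFun := fun a => (a : ℕ) - (m + 1)
      left_inv := fun i => by simp
      right_inv := fun a => by
        apply Subtype.ext
        have := a.2
        simp
        omega }
  have step1 : ∑' a : {a : ℕ // m < a}, q ^ m * z ^ ((a : ℕ) - m) / qInt q a * Cq1 q a n z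
      = ∑' i : ℕ, ∑' j : ℕ, T (i, j) := by
    rw [← e.tsum_eq]
    apply tsum_congr
    intro i
    show q ^ m * z ^ ((m+1+i) - m) / qInt q (m+1+i) * Cq1 q (m+1+i) n z = _
    rw [show (m+1+i) - m = i + 1 from by omega]
    rw [Cq1, qHyp]
    rw [← tsum_mul_left, ← tsum_mul_left]
    apply tsum_congr
    intro j
    show _ = q ^ m * z ^ (i + 1 + j) * coefT q n (m+1+i) j
    rw [coefT]
    rw [show (m+1+i) + n = m+1+i+n from rfl]
    ring
  rw [step1, ← hsum.tsum_prod' hsum.prod_factor]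
  have hdiag : ∑' p : ℕ × ℕ, T p = ∑' N, ∑ kl ∈ Finset.HasAntidiagonal.antidiagonal N, T kl := by
    conv_rhs => congr; ext; rw [← Finset.sum_finset_coe, ← tsum_fintype (L := SummationFilter.unconditional _)]
    rw [← Finset.HasAntidiagonal.sigmaAntidiagonalEquivProd.tsum_eq T]
    exact Summable.tsum_sigma' (fun N => (hasSum_fintype _).summable)
      ((Finset.HasAntidiagonal.sigmaAntidiagonalEquivProd).summable_iff.mpr hsum)
  rw [hdiag]
  have hN : ∀ N, ∑ kl ∈ Finset.HasAntidiagonal.antidiagonal N, T kl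
      = (z * q ^ (m * n + m + n) * (qFact q m * qFact q n / qFact q (m+n+1))) *
        (qPoch q (q^(m+1)) N * qPoch q (q^(n+1)) N /
          (qPoch q (q^(m+n+2)) N * qPoch q q N) * z ^ N) := by
    intro N
    rw [Finset.Nat.sum_antidiagonal_eq_sum_range_succ_mk]
    have hterm : ∀ k ∈ Finset.range (N+1),
        T (k, N - k) = (q ^ m * z ^ (N+1)) * coefT q n (m+1+k) (N-k) := by
      intro k hk
      have hk' : k ≤ N := by have := Finset.mem_range.1 hk; omega
      show q ^ m * z ^ (k + 1 + (N-k)) * coefT q n (m+1+k) (N-k) = _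
      rw [show k + 1 + (N-k) = N + 1 from by omega]
    rw [Finset.sum_congr rfl hterm, ← Finset.mul_sum, keyId hq0 hq1 m n N]
    ring
  rw [tsum_congr hN, tsum_mul_left, qHyp]

end basics

/-- ∑_{a>m} (q^m z^{a−m}/[a])·C_q^{(1)}(a,n;z)
  = z·q^{mn+m+n}·[m]![n]!/[m+n+1]!·φ_q(q^{m+1},q^{n+1};q^{m+n+2};z);
in particular the left-hand side is symmetric in m and n. -/
theorem q_connector_sum_eval (q : ℝ) (hq0 : 0 < q) (hq1 : q < 1)
    (z : ℝ) (hz0 : 0 ≤ z) (hz1 : z < 1) (m n : ℕ) :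
    (∑' a : {a : ℕ // m < a}, q ^ m * z ^ ((a : ℕ) - m) / qInt q a * Cq1 q a n z
      = z * q ^ (m * n + m + n) * (qFact q m * qFact q n / qFact q (m + n + 1)) *
        qHyp q (q ^ (m + 1)) (q ^ (n + 1)) (q ^ (m + n + 2)) z) ∧
    (∑' a : {a : ℕ // m < a}, q ^ m * z ^ ((a : ℕ) - m) / qInt q a * Cq1 q a n z
      = ∑' b : {b : ℕ // n < b}, q ^ n * z ^ ((b : ℕ) - n) / qInt q b * Cq1 q b m z) := by
  refine ⟨main_eval hq0 hq1 hz0 hz1 m n, ?_⟩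
  rw [main_eval hq0 hq1 hz0 hz1 m n, main_eval hq0 hq1 hz0 hz1 n m]
  rw [show n * m + n + m = m * n + m + n from by ring,
    show n + m + 1 = m + n + 1 from by omega,
    show n + m + 2 = m + n + 2 from by omega,
    mul_comm (qFact q n) (qFact q m),
    qHyp_comm (q := q) (q ^ (n+1)) (q ^ (m+1)) (q ^ (m+n+2)) z]
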